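/- Let L be a solvable Leibniz A-algebra of derived length at most n+1, and suppose L = B ∔ C (vector space direct sum) where B = L^(n) and C is a subalgebra of L. If D is an ideal of L, then D = (B ∩ D) ∔ (C ∩ D). -/

import Mathlib

/-- A (right) Leibniz algebra structure on an `F`-vector space `L`:
a bilinear bracket satisfying `[x,[y,z]] = [[x,y],z] - [[x,z],y]`. -/
structure LeibnizAlg (F : Type*) (L : Type*) [Field F] [AddCommGroup L] [Module F L] where
  bracket : L →ₗ[F] L →ₗ[F] L
  leibniz : ∀ x y z : L,
    bracket x (bracket y z) = bracket (bracket x y) z - bracket (bracket x z) y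

namespace LeibnizAlg

variable {F : Type*} {L : Type*} [Field F] [AddCommGroup L] [Module F L]

/-- The product `[M, N]` of two subspaces: the span of all brackets `[m, n]`. -/
def prod (A : LeibnizAlg F L) (M N : Submodule F L) : Submodule F L :=
  Submodule.span F {z : L | ∃ m ∈ M, ∃ n ∈ N, z = A.bracket m n}

/-- A subalgebra: a subspace closed under the product. -/
def IsSubalgebra (A : LeibnizAlg F L) (S : Submodule F L) : Prop :=
  A.prod S S ≤ S

/-- A (two-sided) ideal: `[I, L] ⊆ I` and `[L, I] ⊆ I`. -/
def IsIdeal (A : LeibnizAlg F L) (I : Submodule F L) : Prop :=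
  A.prod I ⊤ ≤ I ∧ A.prod ⊤ I ≤ I

/-- Lower central series of a subspace `U`: `lcs U 0 = U = U¹`,
`lcs U k = U^(k+1)`, i.e. `lcs U (k+1) = [lcs U k, U]`. -/
def lcs (A : LeibnizAlg F L) (U : Submodule F L) : ℕ → Submodule F L
  | 0 => U
  | k + 1 => A.prod (lcs A U k) U

/-- `U` is nilpotent: `U^(n+1) = 0` for some `n`. -/
def IsNilpotentSub (A : LeibnizAlg F L) (U : Submodule F L) : Prop :=
  ∃ n : ℕ, A.lcs U n = ⊥

/-- `U` is abelian: `[U, U] = 0`. -/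
def IsAbelian (A : LeibnizAlg F L) (U : Submodule F L) : Prop :=
  A.prod U U = ⊥

/-- An `A`-algebra: every nilpotent subalgebra is abelian. -/
def IsAAlgebra (A : LeibnizAlg F L) : Prop :=
  ∀ U : Submodule F L, A.IsSubalgebra U → A.IsNilpotentSub U → A.IsAbelian U

/-- Derived series: `derSeries 0 = L`, `derSeries (k+1) = [derSeries k, derSeries k]`. -/
def derSeries (A : LeibnizAlg F L) : ℕ → Submodule F L
  | 0 => ⊤
  | k + 1 => A.prod (derSeries A k) (derSeries A k)

/-- `L` is solvable: some term of the derived series vanishes. -/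
def IsSolvable (A : LeibnizAlg F L) : Prop :=
  ∃ n : ℕ, A.derSeries n = ⊥

/-- The centralizer `Z_L(U)` of a subspace `U`. -/
def centralizer (A : LeibnizAlg F L) (U : Submodule F L) : Submodule F L where
  carrier := {x : L | ∀ u ∈ U, A.bracket x u = 0 ∧ A.bracket u x = 0}
  add_mem' := by
    intro a b ha hb u hu
    refine ⟨?_, ?_⟩
    · rw [map_add, LinearMap.add_apply, (ha u hu).1, (hb u hu).1, add_zero]
    · rw [map_add, (ha u hu).2, (hb u hu).2, add_zero]
  zero_mem' := by
    intro u hu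
    refine ⟨?_, ?_⟩
    · rw [map_zero, LinearMap.zero_apply]
    · rw [map_zero]
  smul_mem' := by
    intro c a ha u hu
    refine ⟨?_, ?_⟩
    · rw [map_smul, LinearMap.smul_apply, (ha u hu).1, smul_zero]
    · rw [map_smul, (ha u hu).2, smul_zero]

/-- The centre of the subalgebra `M`: elements of `M` centralizing `M`. -/
def centerOf (A : LeibnizAlg F L) (M : Submodule F L) : Submodule F L :=
  M ⊓ A.centralizer M

/-- `N` is the nilradical: the largest nilpotent ideal. -/
def IsNilradical (A : LeibnizAlg F L) (N : Submodule F L) : Prop :=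
  A.IsIdeal N ∧ A.IsNilpotentSub N ∧
    ∀ I : Submodule F L, A.IsIdeal I → A.IsNilpotentSub I → I ≤ N

/-- A minimal ideal: a nonzero ideal containing no ideal other than `0` and itself. -/
def IsMinimalIdeal (A : LeibnizAlg F L) (I : Submodule F L) : Prop :=
  A.IsIdeal I ∧ I ≠ ⊥ ∧ ∀ J : Submodule F L, A.IsIdeal J → J ≤ I → J = ⊥ ∨ J = I

/-- A maximal subalgebra. -/
def IsMaximalSubalgebra (A : LeibnizAlg F L) (M : Submodule F L) : Prop :=
  A.IsSubalgebra M ∧ M ≠ ⊤ ∧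
    ∀ S : Submodule F L, A.IsSubalgebra S → M ≤ S → S = M ∨ S = ⊤

/-- `L` is φ-free: every ideal contained in all maximal subalgebras is zero. -/
def IsPhiFree (A : LeibnizAlg F L) : Prop :=
  ∀ I : Submodule F L, A.IsIdeal I →
    (∀ M : Submodule F L, A.IsMaximalSubalgebra M → I ≤ M) → I = ⊥

/-- `Asoc L`: the sum of the abelian minimal ideals. -/
def asoc (A : LeibnizAlg F L) : Submodule F L :=
  sSup {I : Submodule F L | A.IsMinimalIdeal I ∧ A.IsAbelian I}

/-- A Cartan subalgebra: a nilpotent, self-normalizing subalgebra. -/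
def IsCartan (A : LeibnizAlg F L) (C : Submodule F L) : Prop :=
  A.IsSubalgebra C ∧ A.IsNilpotentSub C ∧
    ∀ x : L, (∀ c ∈ C, A.bracket x c ∈ C ∧ A.bracket c x ∈ C) → x ∈ C

/-- A maximal nilpotent subalgebra. -/
def IsMaxNilpotentSubalgebra (A : LeibnizAlg F L) (U : Submodule F L) : Prop :=
  A.IsSubalgebra U ∧ A.IsNilpotentSub U ∧
    ∀ V : Submodule F L, A.IsSubalgebra V → A.IsNilpotentSub V → U ≤ V → V = U

end LeibnizAlg


open Submodule

section LinAlg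

variable {F V : Type*} [Field F] [AddCommGroup V] [Module F V]

/-- Descending chains of submodules of a finite-dimensional space stabilize. -/
lemma chain_stab [FiniteDimensional F V] (c : ℕ → Submodule F V)
    (hc : ∀ k, c (k + 1) ≤ c k) : ∃ N, ∀ m, N ≤ m → c m = c N := by
  have hanti : Antitone c := antitone_nat_of_succ_le hc
  obtain ⟨N, hN⟩ := IsArtinian.monotone_stabilizes
    (⟨fun n => OrderDual.toDual (c n), fun a b hab => hanti hab⟩ : ℕ →o (Submodule F V)ᵒᵈ)
  exact ⟨N, fun m hm => (congrArg OrderDual.ofDual (hN m hm)).symm⟩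

lemma map_mul_apply (f g : Module.End F V) (X : Submodule F V) :
    Submodule.map (f * g) X = Submodule.map f (Submodule.map g X) := by
  rw [show (f * g : Module.End F V) = (f ∘ₗ g : V →ₗ[F] V) from rfl, Submodule.map_comp]

lemma map_pow_le_of_le (f : Module.End F V) {X : Submodule F V}
    (hX : Submodule.map f X ≤ X) : ∀ n, Submodule.map (f ^ n) X ≤ X := by
  intro n
  induction n with
  | zero =>
      rw [pow_zero]
      rintro _ ⟨y, hy, rfl⟩
      simpa using hy
  | succ n ih =>
      rw [pow_succ, map_mul_apply]
      exact le_trans (Submodule.map_mono hX) ih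

lemma map_pow_add (f : Module.End F V) (X : Submodule F V) (a b : ℕ) :
    Submodule.map (f ^ (a + b)) X = Submodule.map (f ^ a) (Submodule.map (f ^ b) X) := by
  rw [pow_add, map_mul_apply]

/-- Relative Fitting decomposition for a single endomorphism on an invariant
subspace of a finite-dimensional space. -/
lemma rel_fitting [FiniteDimensional F V] (f : Module.End F V) (X : Submodule F V)
    (hX : Submodule.map f X ≤ X) :
    ∃ N : ℕ, ∀ n, N ≤ n →
      ((X ⊓ LinearMap.ker (f ^ n)) ⊔ Submodule.map (f ^ n) X = X ∧
       (X ⊓ LinearMap.ker (f ^ n)) ⊓ Submodule.map (f ^ n) X = ⊥ ∧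
       Submodule.map (f ^ n) X = Submodule.map (f ^ N) X) := by
  obtain ⟨N, hN⟩ := chain_stab (fun k => Submodule.map (f ^ k) X) (by
    intro k
    show Submodule.map (f ^ (k + 1)) X ≤ Submodule.map (f ^ k) X
    have h1 : Submodule.map (f ^ (k + 1)) X = Submodule.map (f ^ k) (Submodule.map f X) := by
      rw [pow_succ, map_mul_apply]
    rw [h1]
    exact Submodule.map_mono hX)
  refine ⟨N, fun n hn => ?_⟩
  have hstab : Submodule.map (f ^ n) X = Submodule.map (f ^ N) X := hN n hn
  have hSX : Submodule.map (f ^ n) X ≤ X := map_pow_le_of_le f hX n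
  -- f^n maps (f^n X) onto itself
  have honto : Submodule.map (f ^ n) (Submodule.map (f ^ n) X) = Submodule.map (f ^ n) X := by
    rw [← map_pow_add, hN (n + n) (le_trans hn (Nat.le_add_right n n)), ← hstab]
  -- f^n is injective on f^n X
  have hinj : ∀ x ∈ Submodule.map (f ^ n) X, (f ^ n) x = 0 → x = 0 := by
    intro x hx hfx
    have hres : ∀ y ∈ Submodule.map (f ^ n) X, (f ^ n) y ∈ Submodule.map (f ^ n) X := by
      intro y hy
      have : (f ^ n) y ∈ Submodule.map (f ^ n) (Submodule.map (f ^ n) X) :=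
        Submodule.mem_map_of_mem hy
      rw [honto] at this; exact this
    set g : Submodule.map (f ^ n) X →ₗ[F] Submodule.map (f ^ n) X := (f ^ n).restrict hres
      with hg
    have hgsurj : Function.Surjective g := by
      rintro ⟨y, hy⟩
      rw [← honto] at hy
      obtain ⟨x', hx', hfx'⟩ := hy
      exact ⟨⟨x', hx'⟩, Subtype.ext hfx'⟩
    have hginj : Function.Injective g := (LinearMap.injective_iff_surjective).2 hgsurj
    have h0 : g ⟨x, hx⟩ = g 0 := by
      apply Subtype.ext
      simp [hg, LinearMap.restrict_apply, hfx]
    simpa using congrArg Subtype.val (hginj h0)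
  refine ⟨?_, ?_, hstab⟩
  · -- sup
    apply le_antisymm
    · exact sup_le inf_le_left hSX
    · intro x hx
      have hfx : (f ^ n) x ∈ Submodule.map (f ^ n) (Submodule.map (f ^ n) X) := by
        rw [honto]; exact Submodule.mem_map_of_mem hx
      obtain ⟨s, hs, hfs⟩ := Submodule.mem_map.1 hfx
      have hxs : x - s ∈ X ⊓ LinearMap.ker (f ^ n) := by
        refine Submodule.mem_inf.2 ⟨Submodule.sub_mem X hx (hSX hs), ?_⟩
        rw [LinearMap.mem_ker, map_sub, hfs, sub_self]
      have hx' : x = (x - s) + s := by abel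
      rw [hx']
      exact Submodule.add_mem_sup hxs hs
  · -- disjoint
    rw [eq_bot_iff]
    rintro x ⟨⟨hxX, hxker⟩, hxS⟩
    have := hinj x hxS (LinearMap.mem_ker.1 hxker)
    simpa [Submodule.mem_bot] using this

end LinAlg

section LinAlg2

variable {F V : Type*} [Field F] [AddCommGroup V] [Module F V]

/-- Iterated Fitting decomposition for a finite commuting family of endomorphisms
on an invariant subspace. -/
lemma iter_fitting [FiniteDimensional F V] :
    ∀ (s : List (Module.End F V)), (∀ f ∈ s, ∀ g ∈ s, Commute f g) →
    ∀ (X : Submodule F V), (∀ f ∈ s, Submodule.map f X ≤ X) →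
    ∃ V₀ V₁ : Submodule F V,
      V₀ ⊔ V₁ = X ∧ V₀ ⊓ V₁ = ⊥ ∧
      (∀ f ∈ s, Submodule.map f V₀ ≤ V₀ ∧ Submodule.map f V₁ ≤ V₁) ∧
      (∀ f ∈ s, ∃ N, Submodule.map (f ^ N) V₀ = ⊥) ∧
      (∃ N, ∀ n, N ≤ n → V₁ ≤ ⨆ f ∈ s, Submodule.map (f ^ n) X) ∧
      (∀ W, W ≤ X → (∀ f ∈ s, Submodule.map f W ≤ W) →
        (∀ f ∈ s, ∃ N, Submodule.map (f ^ N) W = ⊥) → W ≤ V₀) ∧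
      (∀ g : Module.End F V, Submodule.map g X ≤ X → (∀ f ∈ s, Commute f g) →
        Submodule.map g V₀ ≤ V₀ ∧ Submodule.map g V₁ ≤ V₁) := by
  intro s
  induction s with
  | nil =>
      intro _ X hX
      refine ⟨X, ⊥, by simp, by simp, ?_, ?_, ⟨0, fun n _ => bot_le⟩, fun W hW _ _ => hW, ?_⟩
      · intro f hf; exact absurd hf List.not_mem_nil
      · intro f hf; exact absurd hf List.not_mem_nil
      · intro g hg _; exact ⟨hg, by simp⟩
  | cons f t ih =>
      intro hcomm X hX
      have hfX : Submodule.map f X ≤ X := hX f (List.mem_cons_self)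
      have hfmem : f ∈ f :: t := List.mem_cons_self
      obtain ⟨N₁, hFit⟩ := rel_fitting f X hfX
      obtain ⟨hsupZ, hdisjZ, -⟩ := hFit N₁ le_rfl
      set Z₀ := X ⊓ LinearMap.ker (f ^ N₁) with hZ₀def
      set Z₁ := Submodule.map (f ^ N₁) X with hZ₁def
      have hZ₀X : Z₀ ≤ X := inf_le_left
      have hZ₁X : Z₁ ≤ X := map_pow_le_of_le f hfX N₁
      -- invariance of the two pieces under anything commuting with f
      have key₀ : ∀ g : Module.End F V, Submodule.map g X ≤ X → Commute f g →
          Submodule.map g Z₀ ≤ Z₀ := by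
        rintro g hgX hfg _ ⟨x, hx, rfl⟩
        refine Submodule.mem_inf.2 ⟨hgX ⟨x, (Submodule.mem_inf.1 hx).1, rfl⟩, ?_⟩
        have hxk : (f ^ N₁) x = 0 := LinearMap.mem_ker.1 (Submodule.mem_inf.1 hx).2
        have hc : (f ^ N₁) * g = g * (f ^ N₁) := (hfg.pow_left N₁).eq
        rw [LinearMap.mem_ker]
        calc (f ^ N₁) (g x) = ((f ^ N₁) * g) x := rfl
          _ = (g * (f ^ N₁)) x := by rw [hc]
          _ = g ((f ^ N₁) x) := rfl
          _ = 0 := by rw [hxk, map_zero]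
      have key₁ : ∀ g : Module.End F V, Submodule.map g X ≤ X → Commute f g →
          Submodule.map g Z₁ ≤ Z₁ := by
        intro g hgX hfg
        rw [hZ₁def, ← map_mul_apply, ← (hfg.pow_left N₁).eq, map_mul_apply]
        exact Submodule.map_mono hgX
      have hcomm_t : ∀ a ∈ t, ∀ b ∈ t, Commute a b := fun a ha b hb =>
        hcomm a (List.mem_cons_of_mem f ha) b (List.mem_cons_of_mem f hb)
      have hft : ∀ g ∈ t, Commute f g := fun g hg =>
        hcomm f hfmem g (List.mem_cons_of_mem f hg)
      have hXt : ∀ g ∈ t, Submodule.map g Z₀ ≤ Z₀ := fun g hg =>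
        key₀ g (hX g (List.mem_cons_of_mem f hg)) (hft g hg)
      obtain ⟨W₀, W₁, hsupW, hdisjW, hinvW, hnilW, ⟨N₂, himW⟩, hPW, hextW⟩ := ih hcomm_t Z₀ hXt
      have hW₀Z : W₀ ≤ Z₀ := hsupW ▸ le_sup_left
      have hW₁Z : W₁ ≤ Z₀ := hsupW ▸ le_sup_right
      -- invariance of W₀, W₁ under f
      have hfW : Submodule.map f W₀ ≤ W₀ ∧ Submodule.map f W₁ ≤ W₁ :=
        hextW f (key₀ f hfX (Commute.refl f)) (fun g hg => (hft g hg).symm)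
      refine ⟨W₀, W₁ ⊔ Z₁, ?_, ?_, ?_, ?_, ?_, ?_, ?_⟩
      · rw [← sup_assoc, hsupW, hsupZ]
      · rw [eq_bot_iff]
        rintro x ⟨hx₀, hx₁⟩
        obtain ⟨w, hw, z, hz, hwz⟩ := Submodule.mem_sup.1 hx₁
        have hzZ₀ : z ∈ Z₀ := by
          have : z = x - w := by rw [← hwz]; abel
          rw [this]
          exact Submodule.sub_mem Z₀ (hW₀Z hx₀) (hW₁Z hw)
        have hz0 : z = 0 := by
          have : z ∈ Z₀ ⊓ Z₁ := ⟨hzZ₀, hz⟩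
          rwa [hdisjZ, Submodule.mem_bot] at this
        have hxw : x = w := by rw [← hwz, hz0, add_zero]
        have : x ∈ W₀ ⊓ W₁ := ⟨hx₀, hxw ▸ hw⟩
        rwa [hdisjW, Submodule.mem_bot] at this
      · intro g hg
        rcases List.mem_cons.1 hg with rfl | hgt
        · exact ⟨hfW.1, by
            rw [Submodule.map_sup]
            exact sup_le (le_trans hfW.2 le_sup_left)
              (le_trans (key₁ g hfX (Commute.refl g)) le_sup_right)⟩
        · refine ⟨(hinvW g hgt).1, ?_⟩
          rw [Submodule.map_sup]
          exact sup_le (le_trans (hinvW g hgt).2 le_sup_left)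
            (le_trans (key₁ g (hX g (List.mem_cons_of_mem f hgt)) (hft g hgt)) le_sup_right)
      · intro g hg
        rcases List.mem_cons.1 hg with rfl | hgt
        · refine ⟨N₁, ?_⟩
          rw [eq_bot_iff]
          rintro _ ⟨x, hx, rfl⟩
          have : x ∈ LinearMap.ker (g ^ N₁) := (Submodule.mem_inf.1 (hW₀Z hx)).2
          simpa [Submodule.mem_bot] using LinearMap.mem_ker.1 this
        · exact hnilW g hgt
      · refine ⟨max N₁ N₂, fun n hn => ?_⟩
        apply sup_le
        · refine le_trans (himW n (le_trans (le_max_right N₁ N₂) hn)) ?_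
          refine iSup₂_le fun g hg => ?_
          exact le_iSup₂_of_le g (List.mem_cons_of_mem f hg) (Submodule.map_mono hZ₀X)
        · obtain ⟨-, -, h3⟩ := hFit n (le_trans (le_max_left N₁ N₂) hn)
          rw [← h3]
          exact le_iSup₂_of_le f hfmem le_rfl
      · -- property P
        intro W hWX hWinv hWnil
        have hWZ₀ : W ≤ Z₀ := by
          intro x hx
          obtain ⟨K, hK⟩ := hWnil f hfmem
          set m := K + N₁ with hm
          have hfmW : Submodule.map (f ^ m) W = ⊥ := by
            rw [hm, add_comm, map_pow_add, hK, Submodule.map_bot]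
          have hfmx : (f ^ m) x = 0 := by
            have : (f ^ m) x ∈ Submodule.map (f ^ m) W := Submodule.mem_map_of_mem hx
            rwa [hfmW, Submodule.mem_bot] at this
          obtain ⟨a, ha, b, hb, hab⟩ := Submodule.mem_sup.1 (hsupZ ▸ hWX hx)
          have hfa : (f ^ m) a ∈ Z₀ := map_pow_le_of_le f (key₀ f hfX (Commute.refl f)) m
            (Submodule.mem_map_of_mem ha)
          have hfb : (f ^ m) b ∈ Z₁ := map_pow_le_of_le f (key₁ f hfX (Commute.refl f)) m
            (Submodule.mem_map_of_mem hb)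
          have hsum : (f ^ m) a + (f ^ m) b = 0 := by
            rw [← map_add, hab, hfmx]
          have hfb0 : (f ^ m) b = 0 := by
            have h1 : (f ^ m) b ∈ Z₀ ⊓ Z₁ := by
              refine ⟨?_, hfb⟩
              have : (f ^ m) b = -((f ^ m) a) := by
                rwa [add_comm, add_eq_zero_iff_eq_neg] at hsum
              rw [this]
              exact Submodule.neg_mem Z₀ hfa
            rwa [hdisjZ, Submodule.mem_bot] at h1
          obtain ⟨-, hdisj_m, hstab_m⟩ := hFit m (by omega)
          have hbX : b ∈ X := hZ₁X hb
          have hb0 : b = 0 := by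
            have : b ∈ (X ⊓ LinearMap.ker (f ^ m)) ⊓ Submodule.map (f ^ m) X := by
              refine ⟨⟨hbX, LinearMap.mem_ker.2 hfb0⟩, ?_⟩
              rw [hstab_m]; exact hb
            rwa [hdisj_m, Submodule.mem_bot] at this
          have : x = a := by rw [← hab, hb0, add_zero]
          rw [this]; exact ha
        exact hPW W hWZ₀ (fun g hg => hWinv g (List.mem_cons_of_mem f hg))
          (fun g hg => hWnil g (List.mem_cons_of_mem f hg))
      · intro g hgX hgcomm
        have hfg : Commute f g := hgcomm f hfmem
        have h0 := hextW g (key₀ g hgX hfg) (fun h hh => hgcomm h (List.mem_cons_of_mem f hh))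
        refine ⟨h0.1, ?_⟩
        rw [Submodule.map_sup]
        exact sup_le (le_trans h0.2 le_sup_left) (le_trans (key₁ g hgX hfg) le_sup_right)

end LinAlg2

section LinAlg3

variable {F V : Type*} [Field F] [AddCommGroup V] [Module F V]

lemma map_one_submodule (C : Submodule F V) : Submodule.map (1 : Module.End F V) C = C := by
  rw [show (1 : Module.End F V) = LinearMap.id from rfl, Submodule.map_id]

/-- Nakayama-style lemma: a subspace nilpotently and stably generated by a
commuting family of endomorphisms is zero. -/
lemma nak [FiniteDimensional F V] :
    ∀ (s : List (Module.End F V)), (∀ f ∈ s, ∀ g ∈ s, Commute f g) →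
    ∀ (C : Submodule F V), (∀ f ∈ s, Submodule.map f C ≤ C) →
    (∀ f ∈ s, ∃ N, Submodule.map (f ^ N) C = ⊥) →
    C ≤ (⨆ f ∈ s, Submodule.map f C) → C = ⊥ := by
  intro s
  induction s with
  | nil =>
      intro _ C _ _ hC
      rw [eq_bot_iff]
      simpa using hC
  | cons g t ih =>
      intro hcomm C hinv hnil hC
      have hgmem : g ∈ g :: t := List.mem_cons_self
      have hgt : ∀ a ∈ t, Commute g a := fun a ha =>
        hcomm g hgmem a (List.mem_cons_of_mem g ha)
      have hcomm_t : ∀ a ∈ t, ∀ b ∈ t, Commute a b := fun a ha b hb =>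
        hcomm a (List.mem_cons_of_mem g ha) b (List.mem_cons_of_mem g hb)
      obtain ⟨N, hgN⟩ := hnil g hgmem
      -- one step down
      have step : ∀ k, Submodule.map (g ^ (k + 1)) C = ⊥ → Submodule.map (g ^ k) C = ⊥ := by
        intro k hk1
        apply ih hcomm_t (Submodule.map (g ^ k) C)
        · intro f hf
          have hcgf : (f * g ^ k) = (g ^ k * f) := ((hgt f hf).pow_left k).eq.symm
          rw [← map_mul_apply, hcgf, map_mul_apply]
          exact Submodule.map_mono (hinv f (List.mem_cons_of_mem g hf))
        · intro f hf
          obtain ⟨M, hM⟩ := hnil f (List.mem_cons_of_mem g hf)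
          refine ⟨M, ?_⟩
          have hcgf : (f ^ M * g ^ k) = (g ^ k * f ^ M) := ((hgt f hf).pow_pow k M).eq.symm
          rw [← map_mul_apply, hcgf, map_mul_apply, hM, Submodule.map_bot]
        · calc Submodule.map (g ^ k) C
              ≤ Submodule.map (g ^ k) (⨆ f ∈ g :: t, Submodule.map f C) :=
                Submodule.map_mono hC
            _ = ⨆ f ∈ g :: t, Submodule.map (g ^ k) (Submodule.map f C) := by
                simp only [Submodule.map_iSup]
            _ ≤ ⨆ f ∈ t, Submodule.map f (Submodule.map (g ^ k) C) := by
                refine iSup₂_le fun f hf => ?_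
                rcases List.mem_cons.1 hf with hfg | hft
                · subst hfg
                  have hb : Submodule.map (f ^ k) (Submodule.map f C) = ⊥ := by
                    rw [← map_mul_apply, ← pow_succ, hk1]
                  rw [hb]; exact bot_le
                · have hcgf : (g ^ k * f) = (f * g ^ k) := ((hgt f hft).pow_left k).eq
                  rw [← map_mul_apply, hcgf, map_mul_apply]
                  exact le_iSup₂_of_le f hft le_rfl
      have hdown : ∀ j, Submodule.map (g ^ (N - j)) C = ⊥ := by
        intro j
        induction j with
        | zero => simpa using hgN
        | succ j ihj =>
            by_cases h : N - j = 0
            · have : N - (j + 1) = 0 := by omega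
              rw [this]; rw [h] at ihj; exact ihj
            · have : N - j = (N - (j + 1)) + 1 := by omega
              rw [this] at ihj
              exact step _ ihj
      have := hdown N
      rwa [Nat.sub_self, pow_zero, map_one_submodule] at this

/-- A uniform nilpotency bound over a finite family. -/
lemma unif_nil [FiniteDimensional F V] (l : List (Module.End F V)) (W : Submodule F V)
    (h : ∀ f ∈ l, ∃ N, Submodule.map (f ^ N) W = ⊥) :
    ∃ N, ∀ f ∈ l, Submodule.map (f ^ N) W = ⊥ := by
  have hpad : ∀ (f : Module.End F V) (N m : ℕ), N ≤ m →
      Submodule.map (f ^ N) W = ⊥ → Submodule.map (f ^ m) W = ⊥ := by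
    intro f N m hNm hN
    have hm : m = (m - N) + N := by omega
    rw [hm, map_pow_add, hN, Submodule.map_bot]
  induction l with
  | nil => exact ⟨0, fun f hf => absurd hf List.not_mem_nil⟩
  | cons f t iht =>
      obtain ⟨N₁, hN₁⟩ := h f (List.mem_cons_self)
      obtain ⟨N₂, hN₂⟩ := iht (fun g hg => h g (List.mem_cons_of_mem f hg))
      refine ⟨max N₁ N₂, fun g hg => ?_⟩
      rcases List.mem_cons.1 hg with hgf | hgt
      · subst hgf
        exact hpad g N₁ (max N₁ N₂) (le_max_left _ _) hN₁
      · exact hpad g N₂ (max N₁ N₂) (le_max_right _ _) (hN₂ g hgt)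

end LinAlg3

namespace LeibnizAlg

section ProdAPI

variable {F L : Type*} [Field F] [AddCommGroup L] [Module F L] (A : LeibnizAlg F L)

lemma mem_prod {M N : Submodule F L} {m n : L} (hm : m ∈ M) (hn : n ∈ N) :
    A.bracket m n ∈ A.prod M N :=
  Submodule.subset_span ⟨m, hm, n, hn, rfl⟩

lemma prod_le {M N P : Submodule F L} (h : ∀ m ∈ M, ∀ n ∈ N, A.bracket m n ∈ P) :
    A.prod M N ≤ P := by
  apply Submodule.span_le.2
  rintro z ⟨m, hm, n, hn, rfl⟩
  exact h m hm n hn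

lemma prod_mono {M N M' N' : Submodule F L} (hM : M ≤ M') (hN : N ≤ N') :
    A.prod M N ≤ A.prod M' N' :=
  A.prod_le fun m hm n hn => A.mem_prod (hM hm) (hN hn)

lemma prod_sup_left (M N P : Submodule F L) :
    A.prod (M ⊔ N) P = A.prod M P ⊔ A.prod N P := by
  apply le_antisymm
  · apply A.prod_le
    intro m hm p hp
    obtain ⟨x, hx, y, hy, rfl⟩ := Submodule.mem_sup.1 hm
    rw [map_add, LinearMap.add_apply]
    exact Submodule.add_mem_sup (A.mem_prod hx hp) (A.mem_prod hy hp)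
  · exact sup_le (A.prod_mono le_sup_left le_rfl) (A.prod_mono le_sup_right le_rfl)

lemma prod_sup_right (M N P : Submodule F L) :
    A.prod M (N ⊔ P) = A.prod M N ⊔ A.prod M P := by
  apply le_antisymm
  · apply A.prod_le
    intro m hm p hp
    obtain ⟨x, hx, y, hy, rfl⟩ := Submodule.mem_sup.1 hp
    rw [map_add]
    exact Submodule.add_mem_sup (A.mem_prod hm hx) (A.mem_prod hm hy)
  · exact sup_le (A.prod_mono le_rfl le_sup_left) (A.prod_mono le_rfl le_sup_right)

end ProdAPI

/-- Relative derived series of a subspace. -/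
def rd {F L : Type*} [Field F] [AddCommGroup L] [Module F L] (A : LeibnizAlg F L)
    (M : Submodule F L) : ℕ → Submodule F L
  | 0 => M
  | k + 1 => A.prod (A.rd M k) (A.rd M k)

section RdAPI

variable {F L : Type*} [Field F] [AddCommGroup L] [Module F L] (A : LeibnizAlg F L)

lemma rd_zero (M : Submodule F L) : A.rd M 0 = M := rfl

lemma rd_succ (M : Submodule F L) (k : ℕ) :
    A.rd M (k + 1) = A.prod (A.rd M k) (A.rd M k) := rfl

lemma rd_step {M : Submodule F L} (hM : A.IsSubalgebra M) :
    ∀ k, A.rd M (k + 1) ≤ A.rd M k := by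
  intro k
  induction k with
  | zero => exact hM
  | succ k ihk => exact A.prod_mono ihk ihk

lemma rd_antitone {M : Submodule F L} (hM : A.IsSubalgebra M) : Antitone (A.rd M) :=
  antitone_nat_of_succ_le (A.rd_step hM)

lemma rd_le_self {M : Submodule F L} (hM : A.IsSubalgebra M) (k : ℕ) : A.rd M k ≤ M :=
  A.rd_antitone hM (Nat.zero_le k)

lemma rd_shift (M : Submodule F L) : ∀ k, A.rd (A.prod M M) k = A.rd M (k + 1) := by
  intro k
  induction k with
  | zero => rfl
  | succ k ihk =>
      show A.prod (A.rd (A.prod M M) k) (A.rd (A.prod M M) k) = A.rd M (k + 2)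
      rw [ihk]
      rfl

lemma rd_top : ∀ k, A.rd ⊤ k = A.derSeries k := by
  intro k
  induction k with
  | zero => rfl
  | succ k ihk =>
      show A.prod (A.rd ⊤ k) (A.rd ⊤ k) = A.prod (A.derSeries k) (A.derSeries k)
      rw [ihk]

/-- Each term of the relative derived series is an ideal of `M`. -/
lemma rd_ideal {M : Submodule F L} (hM : A.IsSubalgebra M) :
    ∀ k, A.prod (A.rd M k) M ≤ A.rd M k ∧ A.prod M (A.rd M k) ≤ A.rd M k := by
  intro k
  induction k with
  | zero => exact ⟨hM, hM⟩
  | succ k ihk =>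
      obtain ⟨ihR, ihL⟩ := ihk
      set T := A.rd M k with hT
      constructor
      · apply A.prod_le
        intro x hx m hm
        induction hx using Submodule.span_induction with
        | mem z hz =>
            obtain ⟨a, ha, b, hb, rfl⟩ := hz
            have key : A.bracket (A.bracket a b) m
                = A.bracket a (A.bracket b m) + A.bracket (A.bracket a m) b := by
              rw [A.leibniz a b m]; abel
            rw [key]
            refine Submodule.add_mem _ ?_ ?_
            · exact A.mem_prod ha (ihR (A.mem_prod hb hm))
            · exact A.mem_prod (ihR (A.mem_prod ha hm)) hb
        | zero =>
            rw [map_zero, LinearMap.zero_apply]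
            exact Submodule.zero_mem _
        | add x y hx hy ihx ihy =>
            rw [map_add, LinearMap.add_apply]
            exact Submodule.add_mem _ ihx ihy
        | smul a x hx ihx =>
            rw [map_smul, LinearMap.smul_apply]
            exact Submodule.smul_mem _ a ihx
      · apply A.prod_le
        intro m hm x hx
        induction hx using Submodule.span_induction with
        | mem z hz =>
            obtain ⟨a, ha, b, hb, rfl⟩ := hz
            rw [A.leibniz m a b]
            refine Submodule.sub_mem _ ?_ ?_
            · exact A.mem_prod (ihL (A.mem_prod hm ha)) hb
            · exact A.mem_prod (ihL (A.mem_prod hm hb)) ha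
        | zero =>
            rw [map_zero]
            exact Submodule.zero_mem _
        | add x y hx hy ihx ihy =>
            rw [map_add]
            exact Submodule.add_mem _ ihx ihy
        | smul a x hx ihx =>
            rw [map_smul]
            exact Submodule.smul_mem _ a ihx

end RdAPI

end LeibnizAlg

namespace LeibnizAlg

/-- Main auxiliary result: relative version of the ideal-decomposition theorem,
proved by induction on the derived length. -/
theorem aux_decomp {F L : Type*} [Field F] [AddCommGroup L] [Module F L]
    [FiniteDimensional F L] (A : LeibnizAlg F L) (hA : A.IsAAlgebra) :
    ∀ (n : ℕ) (M B C D : Submodule F L), A.IsSubalgebra M → A.rd M (n + 1) = ⊥ →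
      B = A.rd M n → A.IsSubalgebra C → C ≤ M → B ⊓ C = ⊥ → B ⊔ C = M →
      A.prod D M ≤ D → A.prod M D ≤ D → D ≤ M →
      D = (B ⊓ D) ⊔ (C ⊓ D) := by
  intro n
  induction n with
  | zero =>
      intro M B C D hM hlen hB hC hCM hdisj hsup hDr hDl hDM
      have hBD : B ⊓ D = D := by rw [hB]; exact inf_eq_right.2 hDM
      rw [hBD]
      exact (sup_eq_left.2 inf_le_right).symm
  | succ k ih =>
      intro M B C D hM hlen hB hC hCM hdisj hsup hDr hDl hDM
      -- the derived subalgebra M₁ = [M, M]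
      set M₁ := A.prod M M with hM₁def
      have hM₁M : M₁ ≤ M := hM
      have hsubM₁ : A.IsSubalgebra M₁ := A.prod_mono hM₁M hM₁M
      have hBM₁ : B ≤ M₁ := by
        rw [hB]
        exact A.rd_antitone hM (Nat.one_le_iff_ne_zero.2 (Nat.succ_ne_zero k))
      -- apply the induction hypothesis inside M₁
      have hsup' : B ⊔ (C ⊓ M₁) = M₁ := by
        have h1 : (B ⊔ C) ⊓ M₁ = B ⊔ (C ⊓ M₁) := sup_inf_assoc_of_le C hBM₁
        rw [hsup, inf_eq_right.2 hM₁M] at h1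
        exact h1.symm
      have hdisj' : B ⊓ (C ⊓ M₁) = ⊥ := by
        rw [eq_bot_iff]
        exact le_trans (inf_le_inf_left B inf_le_left) hdisj.le
      have hCM₁sub : A.IsSubalgebra (C ⊓ M₁) :=
        le_inf (le_trans (A.prod_mono inf_le_left inf_le_left) hC)
          (A.prod_mono (le_trans inf_le_left hCM) (le_trans inf_le_left hCM))
      have hD'r : A.prod (D ⊓ M₁) M₁ ≤ D ⊓ M₁ :=
        le_inf (le_trans (A.prod_mono inf_le_left hM₁M) hDr)
          (A.prod_mono (le_trans inf_le_left hDM) hM₁M)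
      have hD'l : A.prod M₁ (D ⊓ M₁) ≤ D ⊓ M₁ :=
        le_inf (le_trans (A.prod_mono hM₁M inf_le_left) hDl)
          (A.prod_mono hM₁M (le_trans inf_le_left hDM))
      have hIH := ih M₁ B (C ⊓ M₁) (D ⊓ M₁) hsubM₁
        (by rw [hM₁def, A.rd_shift]; exact hlen)
        (by rw [hM₁def, A.rd_shift]; exact hB)
        hCM₁sub inf_le_right hdisj' hsup' hD'r hD'l inf_le_right
      have e1 : B ⊓ (D ⊓ M₁) = B ⊓ D :=
        le_antisymm (inf_le_inf_left B inf_le_left)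
          (le_inf inf_le_left (le_inf inf_le_right (le_trans inf_le_left hBM₁)))
      rw [e1] at hIH
      set R := (C ⊓ M₁) ⊓ (D ⊓ M₁) with hRdef
      have hRC : R ≤ C := le_trans inf_le_left inf_le_left
      have hRD : R ≤ D := le_trans inf_le_right inf_le_left
      -- the subalgebra Q = C ⊓ L^(k)
      set P := A.rd M k with hPdef
      have hBP : B ≤ P := by rw [hB]; exact A.rd_step hM k
      have hPM : P ≤ M := A.rd_le_self hM k
      set Q := C ⊓ P with hQdef
      have hQC : Q ≤ C := inf_le_left
      have hQP : Q ≤ P := inf_le_right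
      have hQM : Q ≤ M := le_trans hQP hPM
      have hPBQ : P = B ⊔ Q := by
        have h1 : (B ⊔ C) ⊓ P = B ⊔ (C ⊓ P) := sup_inf_assoc_of_le C hBP
        rw [hsup, inf_eq_right.2 hPM] at h1
        exact h1
      have hBB : A.prod B B = ⊥ := by
        have : A.prod B B = A.rd M (k + 2) := by rw [hB]; rfl
        rw [this]; exact hlen
      have hQQ : A.prod Q Q = ⊥ := by
        rw [eq_bot_iff, ← hdisj]
        refine le_inf ?_ (le_trans (A.prod_mono hQC hQC) hC)
        rw [hB]
        exact A.prod_mono hQP hQP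
      have hBQ : B = A.prod B Q ⊔ A.prod Q B := by
        have h1 : B = A.prod P P := hB
        rw [hPBQ, A.prod_sup_left, A.prod_sup_right, A.prod_sup_right, hBB, hQQ] at h1
        rw [bot_sup_eq, sup_bot_eq] at h1
        exact h1
      -- ideal properties of B in M
      have hBMr : A.prod B M ≤ B := by rw [hB]; exact (A.rd_ideal hM (k + 1)).1
      have hBMl : A.prod M B ≤ B := by rw [hB]; exact (A.rd_ideal hM (k + 1)).2
      -- a finite spanning set for Q
      obtain ⟨Sq, hSq⟩ := (IsNoetherian.noetherian Q : Q.FG)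
      set qs := Sq.toList with hqsdef
      have hqs_mem : ∀ q ∈ qs, q ∈ Q := by
        intro q hq
        rw [← hSq]
        exact Submodule.subset_span (Finset.mem_toList.1 hq)
      -- the right and left multiplication operators
      set Rop : L → Module.End F L := fun q => A.bracket.flip q with hRopdef
      set Lop : L → Module.End F L := fun q => A.bracket q with hLopdef
      have hRop_apply : ∀ q x, Rop q x = A.bracket x q := fun q x => rfl
      have hLop_apply : ∀ q x, Lop q x = A.bracket q x := fun q x => rfl
      have hbrQQ : ∀ q ∈ Q, ∀ q' ∈ Q, A.bracket q q' = 0 := by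
        intro q hq q' hq'
        have := A.mem_prod hq hq'
        rw [hQQ] at this
        exact Submodule.mem_bot F |>.1 this
      have commRR : ∀ q ∈ Q, ∀ q' ∈ Q, Commute (Rop q) (Rop q') := by
        intro q hq q' hq'
        show Rop q * Rop q' = Rop q' * Rop q
        apply LinearMap.ext
        intro x
        simp only [Module.End.mul_apply, hRop_apply]
        have h := A.leibniz x q' q
        rw [hbrQQ q' hq' q hq, map_zero] at h
        exact (sub_eq_zero.1 h.symm)
      have commLR : ∀ q ∈ Q, ∀ q' ∈ Q, Commute (Rop q) (Lop q') := by
        intro q hq q' hq'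
        show Rop q * Lop q' = Lop q' * Rop q
        apply LinearMap.ext
        intro x
        simp only [Module.End.mul_apply, hRop_apply, hLop_apply]
        have h := A.leibniz q' x q
        rw [hbrQQ q' hq' q hq, map_zero, LinearMap.zero_apply, sub_zero] at h
        exact h.symm
      -- invariance of B under the multiplications
      have hRinvB : ∀ q ∈ Q, Submodule.map (Rop q) B ≤ B := by
        rintro q hq _ ⟨x, hx, rfl⟩
        exact hBMr (A.mem_prod hx (hQM hq))
      have hLinvB : ∀ q ∈ Q, Submodule.map (Lop q) B ≤ B := by
        rintro q hq _ ⟨x, hx, rfl⟩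
        exact hBMl (A.mem_prod (hQM hq) hx)
      -- the commuting family
      set fs : List (Module.End F L) := qs.map Rop with hfsdef
      have hfs_mem : ∀ f ∈ fs, ∃ q ∈ qs, Rop q = f := fun f hf => by
        obtain ⟨q, hq, rfl⟩ := List.mem_map.1 hf
        exact ⟨q, hq, rfl⟩
      have hcomm_fs : ∀ f ∈ fs, ∀ g ∈ fs, Commute f g := by
        intro f hf g hg
        obtain ⟨q, hq, rfl⟩ := hfs_mem f hf
        obtain ⟨q', hq', rfl⟩ := hfs_mem g hg
        exact commRR q (hqs_mem q hq) q' (hqs_mem q' hq')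
      have hinv_fs : ∀ f ∈ fs, Submodule.map f B ≤ B := by
        intro f hf
        obtain ⟨q, hq, rfl⟩ := hfs_mem f hf
        exact hRinvB q (hqs_mem q hq)
      -- spanning lemmas
      have hspanR : ∀ X : Submodule F L, A.prod X Q ≤ ⨆ f ∈ fs, Submodule.map f X := by
        intro X
        apply A.prod_le
        intro x hx q hq
        rw [← hSq] at hq
        induction hq using Submodule.span_induction with
        | mem z hz =>
            have hmem : Rop z ∈ fs := List.mem_map_of_mem (f := Rop) (Finset.mem_toList.2 hz)
            have h1 : Submodule.map (Rop z) X ≤ ⨆ f ∈ fs, Submodule.map f X :=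
              le_iSup₂_of_le (Rop z) hmem le_rfl
            exact h1 ⟨x, hx, rfl⟩
        | zero =>
            rw [map_zero]
            exact Submodule.zero_mem _
        | add a b ha hb iha ihb =>
            rw [map_add]
            exact Submodule.add_mem _ iha ihb
        | smul a z hz ihz =>
            rw [map_smul]
            exact Submodule.smul_mem _ a ihz
      have hspanL : ∀ X : Submodule F L, A.prod Q X ≤ ⨆ q ∈ qs, Submodule.map (Lop q) X := by
        intro X
        apply A.prod_le
        intro q hq x hx
        rw [← hSq] at hq
        induction hq using Submodule.span_induction with
        | mem z hz =>
            have h1 : Submodule.map (Lop z) X ≤ ⨆ q ∈ qs, Submodule.map (Lop q) X :=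
              le_iSup₂_of_le z (Finset.mem_toList.2 hz) le_rfl
            exact h1 ⟨x, hx, rfl⟩
        | zero =>
            rw [map_zero, LinearMap.zero_apply]
            exact Submodule.zero_mem _
        | add a b ha hb iha ihb =>
            rw [map_add, LinearMap.add_apply]
            exact Submodule.add_mem _ iha ihb
        | smul a z hz ihz =>
            rw [map_smul, LinearMap.smul_apply]
            exact Submodule.smul_mem _ a ihz
      -- iterated Fitting decomposition of B
      obtain ⟨V₀, V₁, hsupV, hdisjV, hinvV, hnilV, ⟨NV, himV⟩, hPV, hextV⟩ :=
        iter_fitting fs hcomm_fs B hinv_fs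
      have hV₀B : V₀ ≤ B := hsupV ▸ le_sup_left
      have hV₁B : V₁ ≤ B := hsupV ▸ le_sup_right
      have hLinvV : ∀ q ∈ qs, Submodule.map (Lop q) V₀ ≤ V₀ ∧
          Submodule.map (Lop q) V₁ ≤ V₁ := by
        intro q hq
        refine hextV (Lop q) (hLinvB q (hqs_mem q hq)) ?_
        intro f hf
        obtain ⟨q', hq', rfl⟩ := hfs_mem f hf
        exact commLR q' (hqs_mem q' hq') q (hqs_mem q hq)
      have hprodV₀Q : A.prod V₀ Q ≤ V₀ :=
        le_trans (hspanR V₀) (iSup₂_le fun f hf => (hinvV f hf).1)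
      have hprodQV₀ : A.prod Q V₀ ≤ V₀ :=
        le_trans (hspanL V₀) (iSup₂_le fun q hq => (hLinvV q hq).1)
      have hprodV₁Q : A.prod V₁ Q ≤ V₁ :=
        le_trans (hspanR V₁) (iSup₂_le fun f hf => (hinvV f hf).2)
      have hprodQV₁ : A.prod Q V₁ ≤ V₁ :=
        le_trans (hspanL V₁) (iSup₂_le fun q hq => (hLinvV q hq).2)
      -- P₀ := V₀ ⊔ Q is a nilpotent subalgebra
      have hPP : A.prod (V₀ ⊔ Q) (V₀ ⊔ Q) ≤ V₀ := by
        rw [A.prod_sup_left, A.prod_sup_right, A.prod_sup_right]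
        refine sup_le (sup_le ?_ hprodV₀Q) (sup_le hprodQV₀ ?_)
        · rw [show A.prod V₀ V₀ ≤ V₀ ↔ True from iff_of_true
            (le_trans (le_trans (A.prod_mono hV₀B hV₀B) hBB.le) bot_le) trivial]
          trivial
        · rw [hQQ]; exact bot_le
      have hsubP₀ : A.IsSubalgebra (V₀ ⊔ Q) := le_trans hPP le_sup_left
      -- the descending chain c j
      set c : ℕ → Submodule F L := fun j => (fun X => A.prod X Q)^[j] V₀ with hcdef
      have hc0 : c 0 = V₀ := rfl
      have hcsucc : ∀ j, c (j + 1) = A.prod (c j) Q := by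
        intro j
        rw [hcdef]
        exact Function.iterate_succ_apply' (fun X => A.prod X Q) j V₀
      have hcmono : ∀ j, c (j + 1) ≤ c j := by
        intro j
        induction j with
        | zero =>
            calc c 1 = A.prod (c 0) Q := hcsucc 0
              _ ≤ V₀ := hprodV₀Q
        | succ j ihj =>
            calc c (j + 1 + 1) = A.prod (c (j + 1)) Q := hcsucc (j + 1)
              _ ≤ A.prod (c j) Q := A.prod_mono ihj le_rfl
              _ = c (j + 1) := (hcsucc j).symm
      have hcV₀ : ∀ j, c j ≤ V₀ := by
        intro j
        induction j with
        | zero => exact le_rfl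
        | succ j ihj => exact le_trans (hcmono j) ihj
      have hlcs : ∀ j, A.lcs (V₀ ⊔ Q) (j + 1) ≤ c j := by
        intro j
        induction j with
        | zero => exact hPP
        | succ j ihj =>
            show A.prod (A.lcs (V₀ ⊔ Q) (j + 1)) (V₀ ⊔ Q) ≤ c (j + 1)
            refine le_trans (A.prod_mono ihj le_rfl) ?_
            rw [A.prod_sup_right, hcsucc j]
            refine sup_le ?_ le_rfl
            refine le_trans (le_trans (A.prod_mono (le_trans (hcV₀ j) hV₀B) hV₀B) hBB.le) bot_le
      obtain ⟨N₃, hN₃⟩ := chain_stab c hcmono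
      have hcstable : c N₃ ≤ ⨆ f ∈ fs, Submodule.map f (c N₃) := by
        have h1 : A.prod (c N₃) Q = c N₃ := by
          rw [← hcsucc N₃]
          exact hN₃ (N₃ + 1) (Nat.le_succ N₃)
        exact le_trans (le_of_eq h1.symm) (hspanR (c N₃))
      have hcnil : c N₃ = ⊥ := by
        apply nak fs hcomm_fs (c N₃)
        · intro f hf
          obtain ⟨q, hq, rfl⟩ := hfs_mem f hf
          rintro _ ⟨x, hx, rfl⟩
          have : A.bracket x q ∈ A.prod (c N₃) Q := A.mem_prod hx (hqs_mem q hq)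
          rw [← hcsucc N₃, hN₃ (N₃ + 1) (Nat.le_succ N₃)] at this
          exact this
        · intro f hf
          obtain ⟨N, hN⟩ := hnilV f hf
          exact ⟨N, eq_bot_iff.2 (le_trans (Submodule.map_mono (hcV₀ N₃)) hN.le)⟩
        · exact hcstable
      have hnilP₀ : A.IsNilpotentSub (V₀ ⊔ Q) :=
        ⟨N₃ + 1, eq_bot_iff.2 (le_trans (hlcs N₃) hcnil.le)⟩
      -- the A-algebra property: V₀ ⊔ Q is abelian
      have habel : A.prod (V₀ ⊔ Q) (V₀ ⊔ Q) = ⊥ := hA (V₀ ⊔ Q) hsubP₀ hnilP₀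
      have hV₀Qbot : A.prod V₀ Q = ⊥ :=
        eq_bot_iff.2 (le_trans (A.prod_mono le_sup_left le_sup_right) habel.le)
      have hQV₀bot : A.prod Q V₀ = ⊥ :=
        eq_bot_iff.2 (le_trans (A.prod_mono le_sup_right le_sup_left) habel.le)
      -- conclude B ≤ V₁, hence V₀ = ⊥
      have hBV₁ : B ≤ V₁ := by
        have h1 : A.prod B Q ≤ V₁ := by
          rw [← hsupV, A.prod_sup_left, hV₀Qbot, bot_sup_eq]
          exact hprodV₁Q
        have h2 : A.prod Q B ≤ V₁ := by
          rw [← hsupV, A.prod_sup_right, hQV₀bot, bot_sup_eq]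
          exact hprodQV₁
        calc B = A.prod B Q ⊔ A.prod Q B := hBQ
          _ ≤ V₁ := sup_le h1 h2
      have hV₀bot : V₀ = ⊥ := by
        have h1 : V₀ ≤ V₀ ⊓ V₁ := le_inf le_rfl (le_trans hV₀B hBV₁)
        rw [hdisjV] at h1
        exact le_bot_iff.1 h1
      have himB : ∀ n, NV ≤ n → B ≤ ⨆ f ∈ fs, Submodule.map (f ^ n) B :=
        fun n hn => le_trans hBV₁ (himV n hn)
      -- now decompose the ideal D
      apply le_antisymm
      swap
      · exact sup_le inf_le_right inf_le_right
      intro d hd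
      obtain ⟨b, hb, cc, hcc, hbc⟩ := Submodule.mem_sup.1 (hsup ▸ hDM hd)
      -- K := B ⊓ D is invariant
      set K := B ⊓ D with hKdef
      have hKB : K ≤ B := inf_le_left
      have hKD : K ≤ D := inf_le_right
      have hKinv : ∀ q ∈ qs, Submodule.map (Rop q) K ≤ K := by
        rintro q hq _ ⟨x, hx, rfl⟩
        refine ⟨hBMr (A.mem_prod hx.1 (hQM (hqs_mem q hq))), ?_⟩
        exact hDr (A.mem_prod hx.2 (hQM (hqs_mem q hq)))
      -- the B-component of d is moved into K by each Rop q
      have hbq : ∀ q ∈ qs, Rop q b ∈ K := by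
        intro q hq
        have hqQ := hqs_mem q hq
        have hqM : q ∈ M := hQM hqQ
        have hqC : q ∈ C := hQC hqQ
        have h1 : A.bracket d q ∈ (B ⊓ D) ⊔ R := by
          rw [← hIH]
          exact ⟨hDr (A.mem_prod hd hqM), A.mem_prod (hDM hd) hqM⟩
        obtain ⟨β, hβ, γ, hγ, hβγ⟩ := Submodule.mem_sup.1 h1
        have hdq : A.bracket d q = A.bracket b q + A.bracket cc q := by
          rw [← hbc, map_add, LinearMap.add_apply]
        have hbB : A.bracket b q ∈ B := hBMr (A.mem_prod hb hqM)
        have hccC : A.bracket cc q ∈ C := hC (A.mem_prod hcc hqC)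
        have heq : A.bracket b q - β = γ - A.bracket cc q := by
          have : β + γ = A.bracket b q + A.bracket cc q := by rw [hβγ, hdq]
          rw [eq_sub_iff_add_eq]
          calc A.bracket b q - β + A.bracket cc q
              = A.bracket b q + A.bracket cc q - β := by abel
            _ = β + γ - β := by rw [this]
            _ = γ := by abel
        have hmem : A.bracket b q - β ∈ B ⊓ C := by
          constructor
          · exact Submodule.sub_mem B hbB hβ.1
          · rw [heq]
            exact Submodule.sub_mem C (hRC hγ) hccC
        rw [hdisj, Submodule.mem_bot] at hmem
        have : A.bracket b q = β := by
          have := sub_eq_zero.1 hmem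
          exact this
        rw [hRop_apply, this]
        exact hβ
      -- quotient by K and apply the Fitting machinery there
      have hKle : ∀ q ∈ qs, K ≤ K.comap (Rop q) :=
        fun q hq => Submodule.map_le_iff_le_comap.1 (hKinv q hq)
      set Rbar : {q // q ∈ qs} → Module.End F (L ⧸ K) :=
        fun a => K.mapQ K (Rop a.1) (hKle a.1 a.2) with hRbardef
      have hRbar_mk : ∀ (a : {q // q ∈ qs}) (x : L),
          Rbar a (K.mkQ x) = K.mkQ (Rop a.1 x) := by
        intro a x
        simp only [hRbardef, Submodule.mkQ_apply, Submodule.mapQ_apply]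
      set fsbar : List (Module.End F (L ⧸ K)) := qs.attach.map Rbar with hfsbardef
      have hfsbar_mem : ∀ fb ∈ fsbar, ∃ a : {q // q ∈ qs}, Rbar a = fb := by
        intro fb hfb
        obtain ⟨a, ha, rfl⟩ := List.mem_map.1 hfb
        exact ⟨a, rfl⟩
      have hRbar_pow : ∀ (a : {q // q ∈ qs}) (n : ℕ) (x : L),
          ((Rbar a) ^ n) (K.mkQ x) = K.mkQ (((Rop a.1) ^ n) x) := by
        intro a n
        induction n with
        | zero => intro x; simp
        | succ n ihn =>
            intro x
            rw [pow_succ, pow_succ, Module.End.mul_apply, Module.End.mul_apply, hRbar_mk, ihn]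
      have himgbar : ∀ (a : {q // q ∈ qs}) (n : ℕ) (X : Submodule F L),
          Submodule.map ((Rbar a) ^ n) (Submodule.map K.mkQ X)
            = Submodule.map K.mkQ (Submodule.map ((Rop a.1) ^ n) X) := by
        intro a n X
        apply le_antisymm
        · rintro _ ⟨_, ⟨x, hx, rfl⟩, rfl⟩
          rw [hRbar_pow]
          exact ⟨((Rop a.1) ^ n) x, ⟨x, hx, rfl⟩, rfl⟩
        · rintro _ ⟨_, ⟨x, hx, rfl⟩, rfl⟩
          rw [← hRbar_pow]
          exact ⟨K.mkQ x, ⟨x, hx, rfl⟩, rfl⟩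
      set Bbar := Submodule.map K.mkQ B with hBbardef
      have hcommbar : ∀ fb ∈ fsbar, ∀ gb ∈ fsbar, Commute fb gb := by
        intro fb hfb gb hgb
        obtain ⟨a, rfl⟩ := hfsbar_mem fb hfb
        obtain ⟨a', rfl⟩ := hfsbar_mem gb hgb
        show Rbar a * Rbar a' = Rbar a' * Rbar a
        apply Submodule.linearMap_qext
        apply LinearMap.ext
        intro x
        have hcm := (commRR a.1 (hqs_mem a.1 a.2) a'.1 (hqs_mem a'.1 a'.2)).eq
        have hcmx : Rop a.1 (Rop a'.1 x) = Rop a'.1 (Rop a.1 x) := by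
          have := congrArg (fun f => f x) hcm
          simpa [Module.End.mul_apply] using this
        show (Rbar a * Rbar a') (K.mkQ x) = (Rbar a' * Rbar a) (K.mkQ x)
        rw [Module.End.mul_apply, Module.End.mul_apply, hRbar_mk, hRbar_mk, hRbar_mk, hRbar_mk,
          hcmx]
      have hinvbar : ∀ fb ∈ fsbar, Submodule.map fb Bbar ≤ Bbar := by
        intro fb hfb
        obtain ⟨a, rfl⟩ := hfsbar_mem fb hfb
        have h1 := himgbar a 1 B
        rw [pow_one, pow_one] at h1
        rw [hBbardef, h1]
        exact Submodule.map_mono (hRinvB a.1 (hqs_mem a.1 a.2))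
      obtain ⟨W₀, W₁, hsupW, hdisjW, hinvW, hnilW, _, hPW, _⟩ :=
        iter_fitting fsbar hcommbar Bbar hinvbar
      -- uniform nilpotency bound on W₀
      have hpad : ∀ (fb : Module.End F (L ⧸ K)) (N m : ℕ), N ≤ m →
          Submodule.map (fb ^ N) W₀ = ⊥ → Submodule.map (fb ^ m) W₀ = ⊥ := by
        intro fb N m hNm hN
        have : m = (m - N) + N := by omega
        rw [this, map_pow_add, hN, Submodule.map_bot]
      obtain ⟨Nn, hNn⟩ := unif_nil fsbar W₀ hnilW
      -- Bbar is contained in W₁, so W₀ = ⊥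
      set nn := max NV Nn with hnndef
      have hfull : Bbar ≤ ⨆ fb ∈ fsbar, Submodule.map (fb ^ nn) Bbar := by
        have h0 := himB nn (le_max_left _ _)
        calc Bbar ≤ Submodule.map K.mkQ (⨆ f ∈ fs, Submodule.map (f ^ nn) B) :=
              Submodule.map_mono h0
          _ = ⨆ f ∈ fs, Submodule.map K.mkQ (Submodule.map (f ^ nn) B) := by
              simp only [Submodule.map_iSup]
          _ ≤ ⨆ fb ∈ fsbar, Submodule.map (fb ^ nn) Bbar := by
              refine iSup₂_le fun f hf => ?_
              rw [hfsdef] at hf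
              obtain ⟨q, hq, rfl⟩ := List.mem_map.1 hf
              have hmem : Rbar ⟨q, hq⟩ ∈ fsbar := by
                rw [hfsbardef]
                exact List.mem_map_of_mem (f := Rbar) (List.mem_attach qs ⟨q, hq⟩)
              refine le_iSup₂_of_le (Rbar ⟨q, hq⟩) hmem ?_
              rw [himgbar ⟨q, hq⟩ nn B]
      have hBbarW₁ : Bbar ≤ W₁ := by
        refine le_trans hfull (iSup₂_le fun fb hfb => ?_)
        rw [← hsupW, Submodule.map_sup, hpad fb Nn nn (le_max_right _ _) (hNn fb hfb)]
        rw [bot_sup_eq]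
        exact map_pow_le_of_le fb (hinvW fb hfb).2 nn
      have hW₀bot : W₀ = ⊥ := by
        have h1 : W₀ ≤ W₀ ⊓ W₁ :=
          le_inf le_rfl (le_trans (le_trans (hsupW ▸ le_sup_left) hBbarW₁) le_rfl)
        rw [hdisjW] at h1
        exact le_bot_iff.1 h1
      -- b maps to zero in the quotient
      have hbK : b ∈ K := by
        set xb := K.mkQ b with hxbdef
        have hxbBbar : xb ∈ Bbar := Submodule.mem_map_of_mem hb
        have hfbxb : ∀ fb ∈ fsbar, fb xb = 0 := by
          intro fb hfb
          obtain ⟨a, rfl⟩ := hfsbar_mem fb hfb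
          rw [hxbdef, hRbar_mk]
          rw [Submodule.mkQ_apply, Submodule.Quotient.mk_eq_zero]
          exact hbq a.1 a.2
        set W := Submodule.span F {xb} with hWdef
        have hWBbar : W ≤ Bbar := by
          rw [hWdef, Submodule.span_le, Set.singleton_subset_iff]
          exact hxbBbar
        have hWinv : ∀ fb ∈ fsbar, Submodule.map fb W ≤ W := by
          intro fb hfb
          rw [hWdef, Submodule.map_span, Set.image_singleton, hfbxb fb hfb,
            Submodule.span_zero_singleton]
          exact bot_le
        have hWnil : ∀ fb ∈ fsbar, ∃ N, Submodule.map (fb ^ N) W = ⊥ := by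
          intro fb hfb
          refine ⟨1, ?_⟩
          rw [pow_one, hWdef, Submodule.map_span, Set.image_singleton, hfbxb fb hfb,
            Submodule.span_zero_singleton]
        have hWbot : W ≤ ⊥ := (hPW W hWBbar hWinv hWnil).trans hW₀bot.le
        have : xb ∈ (⊥ : Submodule F (L ⧸ K)) :=
          hWbot (Submodule.mem_span_singleton_self xb)
        rw [Submodule.mem_bot] at this
        rw [hxbdef, Submodule.mkQ_apply, Submodule.Quotient.mk_eq_zero] at this
        exact this
      -- conclude
      have hbD : b ∈ D := hKD hbK
      have hccD : cc ∈ D := by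
        have : cc = d - b := by rw [← hbc]; abel
        rw [this]
        exact Submodule.sub_mem D hd hbD
      rw [← hbc]
      exact Submodule.add_mem_sup (⟨hb, hbD⟩ : b ∈ B ⊓ D) (⟨hcc, hccD⟩ : cc ∈ C ⊓ D)

end LeibnizAlg

/-- Let `L` be a solvable Leibniz A-algebra of derived length at most
`n+1` with `L = B ∔ C`, where `B = L^(n)` and `C` is a subalgebra.  Then every ideal
`D` of `L` satisfies `D = (B ∩ D) ∔ (C ∩ D)`. -/
theorem ideal_decomposes_along_splitting
    {F L : Type*} [Field F] [AddCommGroup L] [Module F L] [FiniteDimensional F L]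
    (A : LeibnizAlg F L) (hA : A.IsAAlgebra) (n : ℕ)
    (hlen : A.derSeries (n + 1) = ⊥)
    (B C : Submodule F L) (hB : B = A.derSeries n) (hC : A.IsSubalgebra C)
    (hdisj : B ⊓ C = ⊥) (hsup : B ⊔ C = ⊤)
    (D : Submodule F L) (hD : A.IsIdeal D) :
    (B ⊓ D) ⊓ (C ⊓ D) = ⊥ ∧ (B ⊓ D) ⊔ (C ⊓ D) = D := by
  constructor
  · rw [eq_bot_iff, ← hdisj]
    exact le_inf (le_trans inf_le_left inf_le_left) (le_trans inf_le_right inf_le_left)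
  · refine (LeibnizAlg.aux_decomp A hA n ⊤ B C D ?_ ?_ ?_ hC le_top hdisj ?_ ?_ ?_ le_top).symm
    · exact le_top
    · rw [LeibnizAlg.rd_top]; exact hlen
    · rw [LeibnizAlg.rd_top]; exact hB
    · rw [hsup]
    · exact hD.1
    · exact hD.2
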